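/- Right contraction for δ-separation: for any directed graph G = (V,E) and any subsets A, B, C, D ⊆ V, if C δ-separates A from B in G (A ir_δ B | C) and B ∪ C δ-separates A from D in G (A ir_δ D | B ∪ C), then C δ-separates A from B ∪ D in G (A ir_δ (B ∪ D) | C). -/

import Mathlib

open Set

variable {V : Type*}

/-- There is a directed path (a sequence of ≥ 2 distinct vertices joined by
directed edges) from `v` to `w`; i.e. `v` is an ancestor of `w`. -/
def DirPathConn (E : V → V → Prop) (v w : V) : Prop :=
  ∃ l : List V, l.Chain' E ∧ l.Nodup ∧ 2 ≤ l.length ∧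
    l.head? = some v ∧ l.getLast? = some w

/-- `an(A)`: vertices outside `A` that are ancestors of some element of `A`. -/
def anSet (E : V → V → Prop) (A : Set V) : Set V :=
  {v | v ∉ A ∧ ∃ a ∈ A, DirPathConn E v a}

/-- `An(A) = A ∪ an(A)`, the smallest ancestral set containing `A`. -/
def AnSet (E : V → V → Prop) (A : Set V) : Set V := A ∪ anSet E A

/-- `pa(A)`: parents of `A` outside of `A`. -/
def paSet (E : V → V → Prop) (A : Set V) : Set V :=
  {v | v ∉ A ∧ ∃ a ∈ A, E v a}

/-- `cl(A) = A ∪ pa(A)`, the closure of `A`. -/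
def clSet (E : V → V → Prop) (A : Set V) : Set V := A ∪ paSet E A

/-- The induced subgraph `G_A` (as an edge relation on `V` supported on `A`). -/
def inducedGraph (E : V → V → Prop) (A : Set V) : V → V → Prop :=
  fun j k => E j k ∧ j ∈ A ∧ k ∈ A

/-- `G^B`: delete from `G` every directed edge starting in `B`. -/
def delOut (E : V → V → Prop) (B : Set V) : V → V → Prop :=
  fun j k => E j k ∧ j ∉ B

/-- The moral graph `G^m`: distinct `j, k` are adjacent iff they are joined by
an edge in some direction or have a common child. -/
def moralGraph (E : V → V → Prop) : V → V → Prop :=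
  fun j k => j ≠ k ∧ (E j k ∨ E k j ∨ ∃ c, E j c ∧ E k c)

/-- `l` is an undirected path from `v` to `w` in the undirected graph `H`:
a sequence of ≥ 2 distinct vertices, consecutive ones adjacent. -/
def IsUPath (H : V → V → Prop) (l : List V) (v w : V) : Prop :=
  l.Chain' H ∧ l.Nodup ∧ 2 ≤ l.length ∧
    l.head? = some v ∧ l.getLast? = some w

/-- `A ⊥_g B | C` in the undirected graph `H`: every path from a vertex of `A`
to a vertex of `B` contains a vertex of `C`. -/
def uSep (H : V → V → Prop) (A B C : Set V) : Prop :=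
  ∀ v ∈ A, ∀ w ∈ B, ∀ l : List V, IsUPath H l v w → ∃ c ∈ C, c ∈ l

/-- δ-separation for pairwise disjoint `A, B, C`: `A ⊥_g B | C` in the moral
graph of the subgraph of `G^B` induced by `An(A ∪ B ∪ C)`. -/
def deltaSepDisjoint (E : V → V → Prop) (A B C : Set V) : Prop :=
  uSep (moralGraph (inducedGraph (delOut E B) (AnSet E (A ∪ B ∪ C)))) A B C

/-- δ-separation `A ir_δ B | C` for general (not necessarily disjoint) sets:
`C \ B` δ-separates `A \ (B ∪ C)` from `B`. -/
def deltaSep (E : V → V → Prop) (A B C : Set V) : Prop :=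
  deltaSepDisjoint E (A \ (B ∪ C)) B (C \ B)


open Set

section AuxHelpers

variable {V : Type*}

theorem aux_head?_append_left {l m : List V} {a : V} (h : l.head? = some a) :
    (l ++ m).head? = some a := by
  cases l with
  | nil => simp at h
  | cons b t => simpa using h

theorem aux_head?_of_append {l m : List V} {a : V} (h : (l ++ m).head? = some a)
    (hl : l ≠ []) : l.head? = some a := by
  cases l with
  | nil => exact absurd rfl hl
  | cons b t => simpa using h

theorem aux_mem_of_head? {l : List V} {a : V} (h : l.head? = some a) : a ∈ l := by
  cases l with
  | nil => simp at h
  | cons b t =>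
    have : b = a := by simpa using h
    simp [this]

theorem aux_mem_of_getLast? : ∀ {l : List V} {a : V}, l.getLast? = some a → a ∈ l
  | [], a, h => by simp at h
  | [b], a, h => by
      have : b = a := by simpa using h
      simp [this]
  | b :: c :: t, a, h => by
      rw [List.getLast?_cons_cons] at h
      exact List.mem_cons_of_mem _ (aux_mem_of_getLast? h)

theorem aux_chain'_imp_of_mem {R R' : V → V → Prop} :
    ∀ l : List V, l.Chain' R → (∀ x ∈ l, ∀ y ∈ l, R x y → R' x y) → l.Chain' R'
  | [] , _, _ => List.isChain_nil
  | [a], _, _ => List.isChain_singleton a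
  | a :: b :: t, h, hm => by
      simp only [List.Chain'] at h ⊢; rw [List.isChain_cons_cons] at h ⊢
      refine ⟨hm a (by simp) b (by simp) h.1, aux_chain'_imp_of_mem (b :: t) h.2 ?_⟩
      intro x hx y hy hxy
      exact hm x (List.mem_cons_of_mem _ hx) y (List.mem_cons_of_mem _ hy) hxy

theorem aux_mem_of_chain'_pairs {R : V → V → Prop} {P : V → Prop}
    (hP : ∀ x y, R x y → P x ∧ P y) :
    ∀ l : List V, l.Chain' R → 2 ≤ l.length → ∀ x ∈ l, P x
  | [], _, h2 => by simp at h2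
  | [a], _, h2 => by simp at h2
  | a :: b :: t, h, _ => by
      simp only [List.Chain'] at h; rw [List.isChain_cons_cons] at h
      intro x hx
      rcases List.mem_cons.mp hx with rfl | hx
      · exact (hP _ _ h.1).1
      · rcases t with _ | ⟨c, t⟩
        · have : x = b := by simpa using hx
          subst this; exact (hP _ _ h.1).2
        · exact aux_mem_of_chain'_pairs hP (b :: c :: t) h.2 (by simp) x hx

theorem aux_exists_takeUntil (S : Set V) :
    ∀ l : List V, (∃ x ∈ l, x ∈ S) →
      ∃ p w₁ q, l = p ++ w₁ :: q ∧ w₁ ∈ S ∧ ∀ x ∈ p, x ∉ S := by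
  intro l
  induction l with
  | nil => rintro ⟨x, hx, -⟩; simp at hx
  | cons a t ih =>
    intro h
    by_cases ha : a ∈ S
    · exact ⟨[], a, t, rfl, ha, by simp⟩
    · obtain ⟨x, hx, hxS⟩ := h
      have hxt : x ∈ t := by
        rcases List.mem_cons.mp hx with rfl | h'
        · exact absurd hxS ha
        · exact h'
      obtain ⟨p, w₁, q, ht, hw, hp⟩ := ih ⟨x, hxt, hxS⟩
      refine ⟨a :: p, w₁, q, by rw [ht]; rfl, hw, ?_⟩
      intro y hy
      rcases List.mem_cons.mp hy with rfl | hy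
      · exact ha
      · exact hp y hy

theorem aux_exists_dup_split :
    ∀ l : List V, ¬ l.Nodup → ∃ x l₁ l₂ l₃, l = l₁ ++ x :: l₂ ++ x :: l₃ := by
  intro l
  induction l with
  | nil => intro h; exact absurd List.nodup_nil h
  | cons a t ih =>
    intro h
    rw [List.nodup_cons] at h
    push_neg at h
    by_cases hat : a ∈ t
    · obtain ⟨s, u, rfl⟩ := List.append_of_mem hat
      exact ⟨a, [], s, u, by simp⟩
    · obtain ⟨x, l₁, l₂, l₃, rfl⟩ := ih (h hat)
      exact ⟨x, a :: l₁, l₂, l₃, by simp⟩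

theorem aux_walk_to_path {R : V → V → Prop} :
    ∀ (n : ℕ) (l : List V), l.length ≤ n → l.Chain' R → ∀ {v w : V},
      l.head? = some v → l.getLast? = some w → v ≠ w →
      ∃ p : List V, p.Chain' R ∧ p.Nodup ∧ 2 ≤ p.length ∧ p.head? = some v ∧
        p.getLast? = some w ∧ ∀ x ∈ p, x ∈ l := by
  intro n
  induction n with
  | zero =>
    intro l hlen _ v w hh _ _
    have : l = [] := List.length_eq_zero_iff.mp (Nat.le_zero.mp hlen)
    subst this; simp at hh
  | succ n ih =>
    intro l hlen hc v w hh hlast hvw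
    by_cases hnd : l.Nodup
    · refine ⟨l, hc, hnd, ?_, hh, hlast, fun x hx => hx⟩
      match l, hh, hlast with
      | [a], hh, hlast =>
        exact absurd (by
          have h1 : a = v := by simpa using hh
          have h2 : a = w := by simpa using hlast
          rw [← h1, ← h2]) hvw
      | a :: b :: t, _, _ => simp
    · obtain ⟨x, l₁, l₂, l₃, rfl⟩ := aux_exists_dup_split l hnd
      have hsplit1 : l₁ ++ x :: l₂ ++ x :: l₃ = l₁ ++ ((x :: l₂) ++ (x :: l₃)) := by simp
      have hc2 : ((x :: l₂) ++ (x :: l₃)).Chain' R := by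
        simp only [List.Chain'] at hc; rw [hsplit1, List.isChain_append] at hc
        exact hc.2.1
      have hc3 : (x :: l₃).Chain' R := (List.isChain_append.mp hc2).2.1
      have hc' : (l₁ ++ x :: l₃).Chain' R := by
        simp only [List.Chain']; rw [List.isChain_append]
        refine ⟨?_, hc3, ?_⟩
        · simp only [List.Chain'] at hc; rw [hsplit1, List.isChain_append] at hc; exact hc.1
        · simp only [List.Chain'] at hc; rw [hsplit1, List.isChain_append] at hc
          intro y hy z hz
          exact hc.2.2 y hy z (by simpa using hz)
      have hh' : (l₁ ++ x :: l₃).head? = some v := by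
        cases l₁ with
        | nil => simpa using hh
        | cons b t => simpa using hh
      have hlast' : (l₁ ++ x :: l₃).getLast? = some w := by
        rw [List.getLast?_append_of_ne_nil _ (by simp : (x :: l₃) ≠ [])]
        rw [hsplit1, List.getLast?_append_of_ne_nil _ (by simp : ((x :: l₂) ++ (x :: l₃)) ≠ []),
          List.getLast?_append_of_ne_nil _ (by simp : (x :: l₃) ≠ [])] at hlast
        exact hlast
      have hlen' : (l₁ ++ x :: l₃).length ≤ n := by
        simp only [List.length_append, List.length_cons] at hlen ⊢
        omega
      obtain ⟨p, pc, pnd, plen, phh, pll, psub⟩ := ih _ hlen' hc' hh' hlast' hvw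
      refine ⟨p, pc, pnd, plen, phh, pll, ?_⟩
      intro y hy
      have := psub y hy
      simp only [List.mem_append, List.mem_cons] at this ⊢
      tauto

theorem aux_transGen_getLast {E : V → V → Prop} :
    ∀ l : List V, l.Chain' E → ∀ {d : V}, l.getLast? = some d →
      ∀ x ∈ l, x = d ∨ Relation.TransGen E x d
  | [] => by intro _ d hd; simp at hd
  | [a] => by
      intro _ d hd x hx
      have h1 : a = d := by simpa using hd
      have h2 : x = a := by simpa using hx
      exact Or.inl (h2.trans h1)
  | a :: b :: t => by
      intro h d hd x hx
      simp only [List.Chain'] at h; rw [List.isChain_cons_cons] at h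
      rw [List.getLast?_cons_cons] at hd
      rcases List.mem_cons.mp hx with rfl | hx
      · rcases aux_transGen_getLast (b :: t) h.2 hd b (by simp) with rfl | htg
        · exact Or.inr (Relation.TransGen.single h.1)
        · exact Or.inr (Relation.TransGen.head h.1 htg)
      · exact aux_transGen_getLast (b :: t) h.2 hd x hx

theorem aux_chain'_of_transGen {E : V → V → Prop} {v w : V}
    (h : Relation.TransGen E v w) :
    ∃ l : List V, l.Chain' E ∧ l.head? = some v ∧ l.getLast? = some w := by
  induction h with
  | single hvb => exact ⟨[v, _], List.isChain_pair.mpr hvb, rfl, by simp⟩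
  | @tail b c htg hbc ih =>
    obtain ⟨l, lc, lh, ll⟩ := ih
    refine ⟨l ++ [c], ?_, aux_head?_append_left lh, List.getLast?_concat⟩
    simp only [List.Chain']; rw [List.isChain_append]
    refine ⟨lc, List.isChain_singleton _, ?_⟩
    intro x hx y hy
    rw [ll] at hx
    have hx' : b = x := by simpa using hx
    have hy' : c = y := by simpa using hy
    rw [← hx', ← hy']
    exact hbc

theorem aux_mem_AnSet_iff {E : V → V → Prop} {S : Set V} {x : V} :
    x ∈ AnSet E S ↔ x ∈ S ∨ ∃ a ∈ S, Relation.TransGen E x a := by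
  constructor
  · intro h
    rcases (Set.mem_union _ _ _).mp h with h | h
    · exact Or.inl h
    · obtain ⟨hx, a, ha, m, mc, mnd, mlen, mh, ml⟩ := h
      have hxa : x ≠ a := fun he => hx (he ▸ ha)
      have hxm : x ∈ m := aux_mem_of_head? mh
      exact Or.inr ⟨a, ha, (aux_transGen_getLast m mc ml x hxm).resolve_left hxa⟩
  · intro h
    rcases h with h | ⟨a, ha, htg⟩
    · exact Set.mem_union_left _ h
    · by_cases hx : x ∈ S
      · exact Set.mem_union_left _ hx
      · refine Set.mem_union_right _ ⟨hx, a, ha, ?_⟩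
        have hxa : x ≠ a := fun he => hx (he ▸ ha)
        obtain ⟨m, mc, mh, ml⟩ := aux_chain'_of_transGen htg
        obtain ⟨p, pc, pnd, plen, phh, pll, -⟩ :=
          aux_walk_to_path m.length m le_rfl mc mh ml hxa
        exact ⟨p, pc, pnd, plen, phh, pll⟩

/-- A walk in `R` with all vertices in `S`. -/
def AuxWalkIn (R : V → V → Prop) (S : Set V) (v w : V) : Prop :=
  ∃ l : List V, l.Chain' R ∧ l.head? = some v ∧ l.getLast? = some w ∧ ∀ x ∈ l, x ∈ S

theorem auxWalkIn_single {R : V → V → Prop} {S : Set V} {v w : V}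
    (h : R v w) (hv : v ∈ S) (hw : w ∈ S) : AuxWalkIn R S v w :=
  ⟨[v, w], List.isChain_pair.mpr h, rfl, by simp, by
    intro x hx
    rcases List.mem_cons.mp hx with rfl | hx
    · exact hv
    · have : x = w := by simpa using hx
      exact this ▸ hw⟩

theorem auxWalkIn_trans {R : V → V → Prop} {S : Set V} {v z w : V}
    (h1 : AuxWalkIn R S v z) (h2 : AuxWalkIn R S z w) : AuxWalkIn R S v w := by
  obtain ⟨l, lc, lh, ll, lS⟩ := h1
  obtain ⟨m, mc, mh, ml, mS⟩ := h2
  cases m with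
  | nil => simp at mh
  | cons a t =>
    have ha : a = z := by simpa using mh
    subst ha
    cases t with
    | nil =>
      have hzw : a = w := by simpa using ml
      exact ⟨l, lc, lh, hzw ▸ ll, lS⟩
    | cons b t' =>
      refine ⟨l ++ b :: t', ?_, aux_head?_append_left lh, ?_, ?_⟩
      · simp only [List.Chain']; rw [List.isChain_append]
        refine ⟨lc, (List.isChain_cons_cons.mp mc).2, ?_⟩
        intro x hx y hy
        rw [ll] at hx
        have hx' : a = x := by simpa using hx
        have hy' : b = y := by simpa using hy
        rw [← hx', ← hy']
        exact (List.isChain_cons_cons.mp mc).1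
      · rw [List.getLast?_append_of_ne_nil _ (by simp : (b :: t') ≠ [])]
        rwa [List.getLast?_cons_cons] at ml
      · intro x hx
        rcases List.mem_append.mp hx with h | h
        · exact lS x h
        · exact mS x (List.mem_cons_of_mem _ h)

theorem auxWalkIn_mono {R R' : V → V → Prop} {S : Set V} {v w : V}
    (h : ∀ x y, R x y → R' x y) : AuxWalkIn R S v w → AuxWalkIn R' S v w :=
  fun ⟨l, lc, lh, ll, lS⟩ => ⟨l, lc.imp h, lh, ll, lS⟩

end AuxHelpers
/-- Right contraction for δ-separation. -/
theorem deltaSep_right_contraction [Fintype V] (E : V → V → Prop)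
    (hE : ∀ j k, E j k → j ≠ k) (A B C D : Set V)
    (h1 : deltaSep E A B C) (h2 : deltaSep E A D (B ∪ C)) :
    deltaSep E A (B ∪ D) C := by
  classical
  have hTset : (A \ (B ∪ D ∪ C)) ∪ (B ∪ D) ∪ (C \ (B ∪ D)) = A ∪ B ∪ C ∪ D := by
    ext x; simp only [mem_union, mem_diff]; tauto
  have hT2set : (A \ (D ∪ (B ∪ C))) ∪ D ∪ ((B ∪ C) \ D) = A ∪ B ∪ C ∪ D := by
    ext x; simp only [mem_union, mem_diff]; tauto
  have hT1set : (A \ (B ∪ C)) ∪ B ∪ (C \ B) = A ∪ B ∪ C := by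
    ext x; simp only [mem_union, mem_diff]; tauto
  unfold deltaSep deltaSepDisjoint at h1 h2 ⊢
  rw [hT1set] at h1
  rw [hT2set] at h2
  rw [hTset]
  set T : Set V := AnSet E (A ∪ B ∪ C ∪ D) with hT
  set T₁ : Set V := AnSet E (A ∪ B ∪ C) with hT₁
  set H : V → V → Prop := moralGraph (inducedGraph (delOut E (B ∪ D)) T) with hH
  set H₂ : V → V → Prop := moralGraph (inducedGraph (delOut E D) T) with hH₂
  set H₁ : V → V → Prop := moralGraph (inducedGraph (delOut E B) T₁) with hH₁
  intro v hv w hw l hl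
  by_contra hcon
  push_neg at hcon
  obtain ⟨hvA, hvBDC⟩ := hv
  rw [mem_union, mem_union, not_or, not_or] at hvBDC
  obtain ⟨⟨hvB, hvD⟩, hvC⟩ := hvBDC
  obtain ⟨hcl, hnl, hll, hheadl, hlastl⟩ := hl
  have hwl : w ∈ l := aux_mem_of_getLast? hlastl
  obtain ⟨p, w₁, q, hlpq, hw₁BD, hpBD⟩ :=
    aux_exists_takeUntil (B ∪ D : Set V) l ⟨w, hwl, hw⟩
  have hπpre : (p ++ [w₁]) ++ q = l := by rw [hlpq]; simp
  have hcπ : (p ++ [w₁]).Chain' H := by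
    have h' : ((p ++ [w₁]) ++ q).Chain' H := by rw [hπpre]; exact hcl
    exact (List.isChain_append.mp h').1
  have hnπ : (p ++ [w₁]).Nodup := by
    have h' : ((p ++ [w₁]) ++ q).Nodup := by rw [hπpre]; exact hnl
    exact (List.nodup_append.mp h').1
  have hheadπ : (p ++ [w₁]).head? = some v :=
    aux_head?_of_append (by rw [hπpre]; exact hheadl) (by simp)
  have hlastπ : (p ++ [w₁]).getLast? = some w₁ := List.getLast?_concat
  have hpne : p ≠ [] := by
    intro h
    rw [h] at hheadπ
    have : w₁ = v := by simpa using hheadπ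
    rw [mem_union] at hw₁BD
    rcases hw₁BD with hb | hd
    · exact hvB (this ▸ hb)
    · exact hvD (this ▸ hd)
  have hlenπ : 2 ≤ (p ++ [w₁]).length := by
    rcases List.exists_cons_of_ne_nil hpne with ⟨a, t, rfl⟩
    simp
  have hpB : ∀ x ∈ p, x ∉ B := fun x hx h => hpBD x hx (Set.mem_union_left _ h)
  have hpD : ∀ x ∈ p, x ∉ D := fun x hx h => hpBD x hx (Set.mem_union_right _ h)
  have hpC : ∀ x ∈ p, x ∉ C := by
    intro x hx hxC
    exact hcon x ⟨hxC, hpBD x hx⟩ (by rw [hlpq]; exact List.mem_append_left _ hx)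
  set S₂ : Set V := {x | x ∈ D ∨ (x ∉ B ∧ x ∉ C)} with hS₂
  have hvS₂ : v ∈ S₂ := Or.inr ⟨hvB, hvC⟩
  have hvADBC : v ∈ A \ (D ∪ (B ∪ C)) := by
    refine ⟨hvA, ?_⟩
    rw [mem_union, mem_union]
    rintro (h | h | h)
    exacts [hvD h, hvB h, hvC h]
  -- key₀ : a walk in H₂ over S₂ from v to a vertex of D contradicts h2
  have key₀ : ∀ z ∈ D, AuxWalkIn H₂ S₂ v z → False := by
    intro z hzD hwz
    have hvz : v ≠ z := fun h => hvD (h ▸ hzD)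
    obtain ⟨m, mc, mh, ml, mS⟩ := hwz
    obtain ⟨pth, pc, pnd, plen, phh, pll, psub⟩ :=
      aux_walk_to_path m.length m le_rfl mc mh ml hvz
    obtain ⟨c, hcBC, hcpth⟩ := h2 v hvADBC z hzD pth ⟨pc, pnd, plen, phh, pll⟩
    obtain ⟨hcBC', hcD⟩ := hcBC
    have hcS₂ : c ∈ S₂ := mS c (psub c hcpth)
    rcases hcS₂ with h | ⟨hB, hC⟩
    · exact hcD h
    · rw [mem_union] at hcBC'
      rcases hcBC' with h | h
      exacts [hB h, hC h]
  -- key₁ : a walk in H₂ over S₂ from v to a vertex of T \ T₁ (outside B ∪ C ∪ D)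
  -- contradicts h2
  have key₁ : ∀ z, AuxWalkIn H₂ S₂ v z → z ∉ B → z ∉ C → z ∉ D → z ∈ T → z ∉ T₁ → False := by
    intro z hwz hzB hzC hzD hzT hzT₁
    rw [hT] at hzT
    rw [hT₁] at hzT₁
    rcases aux_mem_AnSet_iff.mp hzT with hz | ⟨t, htmem, htg⟩
    · simp only [mem_union] at hz
      rcases hz with ((hA | hB') | hC') | hD'
      · exact hzT₁ (aux_mem_AnSet_iff.mpr (Or.inl (by simp only [mem_union]; tauto)))
      · exact hzB hB'
      · exact hzC hC'
      · exact hzD hD'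
    · simp only [mem_union] at htmem
      rcases htmem with ((hA | hB') | hC') | hD'
      · exact hzT₁ (aux_mem_AnSet_iff.mpr (Or.inr
          ⟨t, by simp only [mem_union]; tauto, htg⟩))
      · exact hzT₁ (aux_mem_AnSet_iff.mpr (Or.inr
          ⟨t, by simp only [mem_union]; tauto, htg⟩))
      · exact hzT₁ (aux_mem_AnSet_iff.mpr (Or.inr
          ⟨t, by simp only [mem_union]; tauto, htg⟩))
      · -- t ∈ D : follow a directed path from z down to D
        obtain ⟨m, mc, mh, ml⟩ := aux_chain'_of_transGen htg
        have htm : t ∈ m := aux_mem_of_getLast? ml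
        obtain ⟨p', d, q', hm, hdW, hp'W⟩ :=
          aux_exists_takeUntil (B ∪ C ∪ D : Set V) m
            ⟨t, htm, by simp only [mem_union]; tauto⟩
        have hzwpre : (p' ++ [d]) ++ q' = m := by rw [hm]; simp
        have hzwchain : (p' ++ [d]).Chain' E := by
          have h' : ((p' ++ [d]) ++ q').Chain' E := by rw [hzwpre]; exact mc
          exact (List.isChain_append.mp h').1
        have hzwhead : (p' ++ [d]).head? = some z :=
          aux_head?_of_append (by rw [hzwpre]; exact mh) (by simp)
        have hzwlast : (p' ++ [d]).getLast? = some d := List.getLast?_concat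
        have hzmem : z ∈ p' ++ [d] := aux_mem_of_head? hzwhead
        have hzW : z ∉ (B ∪ C ∪ D : Set V) := by
          simp only [mem_union]; tauto
        have hzd : z ≠ d := fun h => hzW (h ▸ hdW)
        have htgzd : Relation.TransGen E z d :=
          (aux_transGen_getLast _ hzwchain hzwlast z hzmem).resolve_left hzd
        have hdD : d ∈ D := by
          simp only [mem_union] at hdW
          rcases hdW with (hB' | hC') | hD'
          · exact absurd (aux_mem_AnSet_iff.mpr (Or.inr
              ⟨d, by simp only [mem_union]; tauto, htgzd⟩)) hzT₁
          · exact absurd (aux_mem_AnSet_iff.mpr (Or.inr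
              ⟨d, by simp only [mem_union]; tauto, htgzd⟩)) hzT₁
          · exact hD'
        have hdT : d ∈ T := by
          rw [hT]
          exact aux_mem_AnSet_iff.mpr (Or.inl (by simp only [mem_union]; tauto))
        have hp'T : ∀ x ∈ p', x ∈ T := by
          intro x hx
          have hxzw : x ∈ p' ++ [d] := List.mem_append_left _ hx
          have hxd : x ≠ d := fun h => hp'W x hx (h ▸ hdW)
          have htgxd : Relation.TransGen E x d :=
            (aux_transGen_getLast _ hzwchain hzwlast x hxzw).resolve_left hxd
          rw [hT]
          exact aux_mem_AnSet_iff.mpr (Or.inr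
            ⟨d, by simp only [mem_union]; tauto, htgxd⟩)
        have hp'D : ∀ x ∈ p', x ∉ D := by
          intro x hx h
          exact hp'W x hx (by simp only [mem_union]; tauto)
        have hzwH₂ : (p' ++ [d]).Chain' H₂ := by
          simp only [List.Chain']; rw [List.isChain_append]
          have hcp' : p'.Chain' E := (List.isChain_append.mp hzwchain).1
          have hjun := (List.isChain_append.mp hzwchain).2.2
          refine ⟨?_, List.isChain_singleton _, ?_⟩
          · refine aux_chain'_imp_of_mem p' hcp' ?_
            intro x hx y hy hxy
            exact ⟨hE _ _ hxy, Or.inl ⟨⟨hxy, hp'D x hx⟩, hp'T x hx, hp'T y hy⟩⟩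
          · intro x hx y hy
            have hy' : d = y := by simpa using hy
            have hxp' : x ∈ p' := aux_mem_of_getLast? (Option.mem_def.mp hx)
            have hExd : E x d := hjun x hx d (by simp)
            exact hy' ▸ ⟨hE _ _ hExd, Or.inl ⟨⟨hExd, hp'D x hxp'⟩, hp'T x hxp', hdT⟩⟩
        have hwzd : AuxWalkIn H₂ S₂ z d := by
          refine ⟨p' ++ [d], hzwH₂, hzwhead, hzwlast, ?_⟩
          intro x hx
          rcases List.mem_append.mp hx with h | h
          · refine Or.inr ⟨?_, ?_⟩
            · intro hB'; exact hp'W x h (by simp only [mem_union]; tauto)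
            · intro hC'; exact hp'W x h (by simp only [mem_union]; tauto)
          · have : x = d := by simpa using h
            exact Or.inl (this ▸ hdD)
        exact key₀ d hdD (auxWalkIn_trans hwz hwzd)
  -- H edges are H₂ edges
  have hHH₂ : ∀ x y, H x y → H₂ x y := by
    intro x y hxy
    obtain ⟨hne, hor⟩ := hxy
    refine ⟨hne, ?_⟩
    rcases hor with ⟨⟨he, hn⟩, hxT, hyT⟩ | ⟨⟨he, hn⟩, hyT, hxT⟩ |
      ⟨c, ⟨⟨he1, hn1⟩, hxT, hcT⟩, ⟨he2, hn2⟩, hyT, hcT'⟩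
    · exact Or.inl ⟨⟨he, fun h => hn (Set.mem_union_right _ h)⟩, hxT, hyT⟩
    · exact Or.inr (Or.inl ⟨⟨he, fun h => hn (Set.mem_union_right _ h)⟩, hyT, hxT⟩)
    · exact Or.inr (Or.inr ⟨c, ⟨⟨he1, fun h => hn1 (Set.mem_union_right _ h)⟩, hxT, hcT⟩,
        ⟨he2, fun h => hn2 (Set.mem_union_right _ h)⟩, hyT, hcT'⟩)
  -- prefix walks from v to each vertex of p
  have pref : ∀ x ∈ p, AuxWalkIn H₂ S₂ v x := by
    intro x hx
    obtain ⟨p₁, p₂, hp12⟩ := List.append_of_mem hx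
    have hpre : (p₁ ++ [x]) ++ (p₂ ++ w₁ :: q) = l := by rw [hlpq, hp12]; simp
    have hcpp : (p₁ ++ [x]).Chain' H := by
      have h' : ((p₁ ++ [x]) ++ (p₂ ++ w₁ :: q)).Chain' H := by rw [hpre]; exact hcl
      exact (List.isChain_append.mp h').1
    refine ⟨p₁ ++ [x], aux_chain'_imp_of_mem _ hcpp (fun a _ b _ h => hHH₂ a b h),
      aux_head?_of_append (by rw [hpre]; exact hheadl) (by simp),
      List.getLast?_concat, ?_⟩
    intro y hy
    have hyp : y ∈ p := by
      rw [hp12]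
      rcases List.mem_append.mp hy with h | h
      · exact List.mem_append_left _ h
      · have : y = x := by simpa using h
        rw [this]
        exact List.mem_append_right _ (List.mem_cons_self)
    exact Or.inr ⟨hpB y hyp, hpC y hyp⟩
  -- every vertex of p ++ [w₁] lies in T
  have hπT : ∀ x ∈ p ++ [w₁], x ∈ T := by
    refine aux_mem_of_chain'_pairs ?_ _ hcπ hlenπ
    intro x y hxy
    obtain ⟨hne, hor⟩ := hxy
    rcases hor with ⟨_, hxT, hyT⟩ | ⟨_, hyT, hxT⟩ | ⟨c, ⟨_, hxT, _⟩, ⟨_, hyT, _⟩⟩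
    · exact ⟨hxT, hyT⟩
    · exact ⟨hxT, hyT⟩
    · exact ⟨hxT, hyT⟩
  have hpT₁ : ∀ x ∈ p, x ∈ T₁ := by
    intro x hx
    by_contra hxT₁
    exact key₁ x (pref x hx) (hpB x hx) (hpC x hx) (hpD x hx)
      (hπT x (List.mem_append_left _ hx)) hxT₁
  -- split on whether w₁ ∈ D
  by_cases hw₁D : w₁ ∈ D
  · refine key₀ w₁ hw₁D ⟨p ++ [w₁],
      aux_chain'_imp_of_mem _ hcπ (fun a _ b _ h => hHH₂ a b h), hheadπ, hlastπ, ?_⟩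
    intro x hx
    rcases List.mem_append.mp hx with h | h
    · exact Or.inr ⟨hpB x h, hpC x h⟩
    · have : x = w₁ := by simpa using h
      exact Or.inl (this ▸ hw₁D)
  · have hw₁B : w₁ ∈ B := by
      rw [mem_union] at hw₁BD
      exact hw₁BD.resolve_right hw₁D
    have hπT₁ : ∀ x ∈ p ++ [w₁], x ∈ T₁ := by
      intro x hx
      rcases List.mem_append.mp hx with h | h
      · exact hpT₁ x h
      · have : x = w₁ := by simpa using h
        rw [this, hT₁]
        exact aux_mem_AnSet_iff.mpr (Or.inl (by simp only [mem_union]; tauto))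
    have hcπ₁ : (p ++ [w₁]).Chain' H₁ := by
      refine aux_chain'_imp_of_mem _ hcπ ?_
      intro x hx y hy hxy
      have hxT₁ := hπT₁ x hx
      have hyT₁ := hπT₁ y hy
      obtain ⟨hne, hor⟩ := hxy
      refine ⟨hne, ?_⟩
      rcases hor with ⟨⟨he, hn⟩, _, _⟩ | ⟨⟨he, hn⟩, _, _⟩ |
        ⟨c, ⟨⟨he1, hn1⟩, hxT, hcT⟩, ⟨he2, hn2⟩, hyT, hcT'⟩
      · exact Or.inl ⟨⟨he, fun h => hn (Set.mem_union_left _ h)⟩, hxT₁, hyT₁⟩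
      · exact Or.inr (Or.inl ⟨⟨he, fun h => hn (Set.mem_union_left _ h)⟩, hyT₁, hxT₁⟩)
      · -- common child case
        have hxp : x ∈ p := by
          rcases List.mem_append.mp hx with h | h
          · exact h
          · exfalso
            have : x = w₁ := by simpa using h
            exact hn1 (Set.mem_union_left _ (this ▸ hw₁B))
        have hcT₁ : c ∈ T₁ := by
          by_contra hcT₁
          have hwx : AuxWalkIn H₂ S₂ v x := pref x hxp
          have hcB : c ∉ B := fun h => hcT₁ (by
            rw [hT₁]
            exact aux_mem_AnSet_iff.mpr (Or.inl (by simp only [mem_union]; tauto)))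
          have hcC : c ∉ C := fun h => hcT₁ (by
            rw [hT₁]
            exact aux_mem_AnSet_iff.mpr (Or.inl (by simp only [mem_union]; tauto)))
          have hedge : H₂ x c :=
            ⟨hE _ _ he1, Or.inl ⟨⟨he1, fun h => hn1 (Set.mem_union_right _ h)⟩, hxT, hcT⟩⟩
          have hxS₂ : x ∈ S₂ := Or.inr ⟨hpB x hxp, hpC x hxp⟩
          by_cases hcD : c ∈ D
          · exact key₀ c hcD (auxWalkIn_trans hwx (auxWalkIn_single hedge hxS₂ (Or.inl hcD)))
          · exact key₁ c (auxWalkIn_trans hwx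
              (auxWalkIn_single hedge hxS₂ (Or.inr ⟨hcB, hcC⟩))) hcB hcC hcD hcT hcT₁
        exact Or.inr (Or.inr ⟨c,
          ⟨⟨he1, fun h => hn1 (Set.mem_union_left _ h)⟩, hxT₁, hcT₁⟩,
          ⟨he2, fun h => hn2 (Set.mem_union_left _ h)⟩, hyT₁, hcT₁⟩)
    have hvABC : v ∈ A \ (B ∪ C) := by
      refine ⟨hvA, ?_⟩
      rw [mem_union]
      rintro (h | h)
      exacts [hvB h, hvC h]
    obtain ⟨c, hcCB, hcmem⟩ := h1 v hvABC w₁ hw₁B (p ++ [w₁])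
      ⟨hcπ₁, hnπ, hlenπ, hheadπ, hlastπ⟩
    obtain ⟨hcC', hcB'⟩ := hcCB
    rcases List.mem_append.mp hcmem with h | h
    · exact hpC c h hcC'
    · have : c = w₁ := by simpa using h
      exact hcB' (this ▸ hw₁B)
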